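/- Tian–Pearl upper bound on PN: for every P as in the context, P(Y₀ = false ∧ X = true ∧ Y = true) ≤ P(Y₀ = false) − P(X = false ∧ Y = false); consequently, if P(X = true ∧ Y = true) > 0 then PN ≤ min {1, (P(Y₀ = false) − P(X = false ∧ Y = false)) / P(X = true ∧ Y = true)}. -/
import Mathlib


/-- The probability of an event `E` under a mass function `P` on a finite type. -/
noncomputable def prob {Ω : Type*} [Fintype Ω] (P : Ω → ℝ) (E : Set Ω) : ℝ :=
  ∑ ω, E.indicator P ω

/-- The binary counterfactual sample space: coordinates `(Y₀, Y₁, X)`, i.e. the potential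
outcomes `Y₀ = Y_{x'}` and `Y₁ = Y_x` and the treatment `X`. -/
abbrev BOmega : Type := Bool × Bool × Bool

/-- The observed outcome defined by consistency: `Y := if X then Y₁ else Y₀`. -/
def Yobs (ω : BOmega) : Bool := if ω.2.2 then ω.2.1 else ω.1

/-- Tian–Pearl upper bound on PN: `P(y'_{x'}, x, y) ≤ P(y'_{x'}) − P(x', y')`;
consequently, if `P(x, y) > 0` then `PN ≤ min {1, (P(y'_{x'}) − P(x', y')) / P(x, y)}`. -/
theorem tian_pearl_pn_upper_bound
    (P : BOmega → ℝ) (hP0 : ∀ ω, 0 ≤ P ω) (hP1 : ∑ ω, P ω = 1) :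
    (prob P {ω | ω.1 = false ∧ ω.2.2 = true ∧ Yobs ω = true} ≤
      prob P {ω | ω.1 = false} - prob P {ω | ω.2.2 = false ∧ Yobs ω = false}) ∧
    (0 < prob P {ω | ω.2.2 = true ∧ Yobs ω = true} →
      prob P {ω | ω.1 = false ∧ ω.2.2 = true ∧ Yobs ω = true} /
          prob P {ω | ω.2.2 = true ∧ Yobs ω = true} ≤
        min 1 ((prob P {ω | ω.1 = false} - prob P {ω | ω.2.2 = false ∧ Yobs ω = false}) /
          prob P {ω | ω.2.2 = true ∧ Yobs ω = true})) := by
  have h1 : prob P {ω | ω.1 = false ∧ ω.2.2 = true ∧ Yobs ω = true} ≤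
      prob P {ω | ω.1 = false} - prob P {ω | ω.2.2 = false ∧ Yobs ω = false} := by
    simp only [prob, Set.indicator, Fintype.sum_prod_type, Fintype.sum_bool, Yobs,
      Set.mem_setOf_eq]
    simp only [if_true, if_false]
    norm_num
    linarith [hP0 (false, false, false), hP0 (false, false, true), hP0 (false, true, false),
      hP0 (false, true, true), hP0 (true, false, false), hP0 (true, false, true),
      hP0 (true, true, false), hP0 (true, true, true)]
  have h2 : prob P {ω | ω.1 = false ∧ ω.2.2 = true ∧ Yobs ω = true} ≤
      prob P {ω | ω.2.2 = true ∧ Yobs ω = true} := by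
    simp only [prob, Set.indicator, Fintype.sum_prod_type, Fintype.sum_bool, Yobs,
      Set.mem_setOf_eq]
    simp only [if_true, if_false]
    norm_num
    linarith [hP0 (false, false, false), hP0 (false, false, true), hP0 (false, true, false),
      hP0 (false, true, true), hP0 (true, false, false), hP0 (true, false, true),
      hP0 (true, true, false), hP0 (true, true, true)]
  refine ⟨h1, fun hd => le_min ?_ ?_⟩
  · rw [div_le_one hd]; exact h2
  · exact div_le_div_of_nonneg_right h1 hd.le |>.trans_eq rfl
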